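/- Let A ∈ ℝ^{m×n} with rows aⁱ, b ∈ ℝᵐ, data x̂¹,…,x̂ᴷ, τ ≥ 0, θ ∈ [0,1], and constants M₁, M₂ sufficiently large. Suppose (v̄, ū, {ε̄ᵏ}) with v̄ ∈ {0,1}ᵐ, ū ∈ {0,1}ᴷ satisfies: bᵢ ≤ (aⁱ)ᵀ(x̂ᵏ − ε̄ᵏ) ≤ bᵢ + M₁(1 − v̄ᵢ) for all i, k; ‖ε̄ᵏ‖ ≤ τ + M₂(1 − ūₖ) for all k; and ∑ₖ ūₖ ≥ θK. Let c̄ be any nonzero conic combination c̄ = ∑_{i : v̄ᵢ=1} λᵢ aⁱ with λᵢ ≥ 0. Then setting ȳᵢ = λᵢ for i with v̄ᵢ = 1 and ȳᵢ = 0 otherwise, and S̄ = {k : ūₖ = 1}, the tuple (c̄, {ε̄ᵏ}, ȳ, S̄) satisfies: Aᵀȳ = c̄, ȳ ≥ 0, A(x̂ᵏ − ε̄ᵏ) ≥ b, c̄ᵀ(x̂ᵏ − ε̄ᵏ) = bᵀȳ, and ‖ε̄ᵏ‖ ≤ τ for all k ∈ S̄, with |S̄| ≥ θK. -/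

import Mathlib

open Matrix

/-- (⇐) direction of Theorem 1: from a feasible solution (v̄, ū, {ε̄ᵏ}) of the
big-M MIP reformulation, any nonzero conic combination c̄ of the rows aⁱ with
v̄ᵢ = 1 yields an inverse-feasible cost vector for QIO(K, τ, θ), witnessed by
duals ȳ and the same perturbations, on the selected set S̄ = {k : ūₖ = 1}. -/
theorem mip_to_qio_feasible {m n K : ℕ}
    (A : Matrix (Fin m) (Fin n) ℝ) (b : Fin m → ℝ)
    (xhat : Fin K → (Fin n → ℝ)) (τ θ M1 M2 : ℝ)
    (hτ : 0 ≤ τ) (hM1 : 0 < M1) (hM2 : 0 < M2)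
    (v : Fin m → ℝ) (u : Fin K → ℝ) (ε : Fin K → (Fin n → ℝ))
    (hv : ∀ i, v i = 0 ∨ v i = 1) (hu : ∀ k, u k = 0 ∨ u k = 1)
    (hbigM : ∀ i, ∀ k, b i ≤ A i ⬝ᵥ (xhat k - ε k) ∧
      A i ⬝ᵥ (xhat k - ε k) ≤ b i + M1 * (1 - v i))
    (hεbd : ∀ k, ‖ε k‖ ≤ τ + M2 * (1 - u k))
    (hcard : θ * K ≤ ∑ k, u k)
    (lam : Fin m → ℝ) (hlam : ∀ i, 0 ≤ lam i)
    (c : Fin n → ℝ)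
    (hc : c = ∑ i ∈ Finset.univ.filter (fun i => v i = 1), lam i • A i)
    (hc0 : c ≠ 0) :
    let ybar : Fin m → ℝ := fun i => if v i = 1 then lam i else 0
    let S : Finset (Fin K) := Finset.univ.filter (fun k => u k = 1)
    A.transpose.mulVec ybar = c ∧
      (∀ i, 0 ≤ ybar i) ∧
      (∀ k ∈ S, ∀ i, b i ≤ A.mulVec (xhat k - ε k) i) ∧
      (∀ k ∈ S, c ⬝ᵥ (xhat k - ε k) = b ⬝ᵥ ybar) ∧
      (∀ k ∈ S, ‖ε k‖ ≤ τ) ∧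
      θ * K ≤ S.card := by
  intro ybar S
  have hAeq : ∀ i, v i = 1 → ∀ k, A i ⬝ᵥ (xhat k - ε k) = b i := by
    intro i hvi k
    have h := hbigM i k
    have : A i ⬝ᵥ (xhat k - ε k) ≤ b i := by
      have := h.2; rw [hvi] at this; simpa using this
    linarith [h.1]
  refine ⟨?_, ?_, ?_, ?_, ?_, ?_⟩
  · funext j
    have : A.transpose.mulVec ybar j = ∑ i, ybar i * A i j := by
      simp [Matrix.mulVec, dotProduct, Matrix.transpose_apply, mul_comm]
    rw [this, hc]
    rw [Finset.sum_apply]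
    rw [← Finset.sum_filter_add_sum_filter_not Finset.univ (fun i => v i = 1)]
    have h2 : ∑ i ∈ Finset.univ.filter (fun i => ¬ v i = 1), ybar i * A i j = 0 := by
      apply Finset.sum_eq_zero
      intro i hi
      simp only [Finset.mem_filter] at hi
      simp [ybar, hi.2]
    rw [h2, add_zero]
    apply Finset.sum_congr rfl
    intro i hi
    simp only [Finset.mem_filter] at hi
    simp [ybar, hi.2]
  · intro i
    by_cases h : v i = 1 <;> simp [ybar, h, hlam i]
  · intro k _ i
    exact (hbigM i k).1
  · intro k hk
    rw [hc]
    have : (∑ i ∈ Finset.univ.filter (fun i => v i = 1), lam i • A i) ⬝ᵥ (xhat k - ε k)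
        = ∑ i ∈ Finset.univ.filter (fun i => v i = 1), lam i * (A i ⬝ᵥ (xhat k - ε k)) := by
      simp only [dotProduct, Finset.sum_apply, Pi.smul_apply, smul_eq_mul,
        Finset.sum_mul, Finset.mul_sum, mul_assoc, Pi.sub_apply]
      rw [Finset.sum_comm]
    rw [this]
    have hb : b ⬝ᵥ ybar = ∑ i ∈ Finset.univ.filter (fun i => v i = 1), lam i * b i := by
      rw [dotProduct, ← Finset.sum_filter_add_sum_filter_not Finset.univ (fun i => v i = 1)]
      have h2 : ∑ i ∈ Finset.univ.filter (fun i => ¬ v i = 1), b i * ybar i = 0 := by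
        apply Finset.sum_eq_zero
        intro i hi
        simp only [Finset.mem_filter] at hi
        simp [ybar, hi.2]
      rw [h2, add_zero]
      apply Finset.sum_congr rfl
      intro i hi
      simp only [Finset.mem_filter] at hi
      simp [ybar, hi.2, mul_comm]
    rw [hb]
    apply Finset.sum_congr rfl
    intro i hi
    simp only [Finset.mem_filter] at hi
    rw [hAeq i hi.2 k]
  · intro k hk
    simp only [S, Finset.mem_filter] at hk
    have := hεbd k
    rw [hk.2] at this
    simpa using this
  · calc θ * K ≤ ∑ k, u k := hcard
      _ = ∑ k ∈ S, u k := by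
          rw [← Finset.sum_filter_add_sum_filter_not Finset.univ (fun k => u k = 1)]
          have : ∑ k ∈ Finset.univ.filter (fun k => ¬ u k = 1), u k = 0 := by
            apply Finset.sum_eq_zero
            intro k hk
            simp only [Finset.mem_filter] at hk
            rcases hu k with h | h
            · exact h
            · exact absurd h hk.2
          rw [this, add_zero]
      _ = S.card := by
          rw [Finset.sum_congr rfl (fun k hk => (Finset.mem_filter.mp hk).2)]
          simp
          rfl
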